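/- arXiv:1711.08831 — 5 statements merged into one kernel-verified Lean document; each statement's English description precedes it below -/
import Mathlib

section
/- Let P and Q be orthogonal projections on a finite-dimensional real inner product space and U = (2P − I)(2Q − I). Then a vector z satisfies Uz = z if and only if z lies in the direct sum (col(P) ∩ col(Q)) ⊕ (ker(P) ∩ ker(Q)). -/
open Matrix LinearMap

theorem stmt_3 {n : ℕ} (P Q : Matrix (Fin n) (Fin n) ℝ)
    (hP2 : P * P = P) (hPs : Pᵀ = P) (hQ2 : Q * Q = Q) (hQs : Qᵀ = Q)
    (z : Fin n → ℝ) :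
    (((2 : ℝ) • P - 1) * ((2 : ℝ) • Q - 1)) *ᵥ z = z ↔
    z ∈ (LinearMap.range (Matrix.toLin' P) ⊓ LinearMap.range (Matrix.toLin' Q)) ⊔
        (LinearMap.ker (Matrix.toLin' P) ⊓ LinearMap.ker (Matrix.toLin' Q)) := by
  have hA : (((2 : ℝ) • P - 1) * ((2 : ℝ) • P - 1)) = 1 := by
    simp [mul_sub, sub_mul, Matrix.smul_mul, Matrix.mul_smul, hP2, smul_smul]
    module
  constructor
  · intro h
    -- from Uz = z deduce P z = Q z
    have h1 : ((2 : ℝ) • P - 1) *ᵥ (((2 : ℝ) • Q - 1) *ᵥ z) = z := by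
      rw [Matrix.mulVec_mulVec]; exact h
    have h2 : ((2 : ℝ) • Q - 1) *ᵥ z = ((2 : ℝ) • P - 1) *ᵥ z := by
      have h5 := congrArg (fun v => ((2 : ℝ) • P - 1) *ᵥ v) h1
      rwa [Matrix.mulVec_mulVec, hA, Matrix.one_mulVec] at h5
    have hPQ : P *ᵥ z = Q *ᵥ z := by
      have h3 : (2 : ℝ) • (Q *ᵥ z) - z = (2 : ℝ) • (P *ᵥ z) - z := by
        simpa [Matrix.sub_mulVec, Matrix.smul_mulVec, Matrix.one_mulVec] using h2
      have h4 : (2 : ℝ) • (Q *ᵥ z) = (2 : ℝ) • (P *ᵥ z) := by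
        have := congrArg (fun v => v + z) h3
        simpa using this
      have := smul_right_injective (Fin n → ℝ) (two_ne_zero (α := ℝ)) h4
      exact this.symm
    refine Submodule.mem_sup.2 ⟨P *ᵥ z, ?_, z - P *ᵥ z, ?_, by abel⟩
    · refine ⟨⟨z, rfl⟩, ⟨z, hPQ.symm⟩⟩
    · constructor
      · show Matrix.toLin' P (z - P *ᵥ z) = 0
        simp only [Matrix.toLin'_apply, Matrix.mulVec_sub, ← Matrix.mulVec_mulVec, ]
        rw [Matrix.mulVec_mulVec, hP2, sub_self]
      · show Matrix.toLin' Q (z - P *ᵥ z) = 0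
        simp only [Matrix.toLin'_apply, Matrix.mulVec_sub]
        rw [hPQ, Matrix.mulVec_mulVec, hQ2, sub_self]
  · intro h
    obtain ⟨u, hu, v, hv, rfl⟩ := Submodule.mem_sup.1 h
    obtain ⟨⟨a, ha⟩, ⟨b, hb⟩⟩ := hu
    obtain ⟨hv1, hv2⟩ := hv
    simp only [Matrix.toLin'_apply] at ha hb
    have hPu : P *ᵥ u = u := by
      rw [← ha, Matrix.mulVec_mulVec, hP2]
    have hQu : Q *ᵥ u = u := by
      rw [← hb, Matrix.mulVec_mulVec, hQ2]
    have hPv : P *ᵥ v = 0 := hv1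
    have hQv : Q *ᵥ v = 0 := hv2
    have hB : ((2 : ℝ) • Q - 1) *ᵥ (u + v) = u - v := by
      simp only [Matrix.sub_mulVec, Matrix.smul_mulVec, Matrix.one_mulVec,
        Matrix.mulVec_add, hQu, hQv]
      module
    have hAv : ((2 : ℝ) • P - 1) *ᵥ (u - v) = u + v := by
      simp only [Matrix.sub_mulVec, Matrix.smul_mulVec, Matrix.one_mulVec,
        Matrix.mulVec_sub, hPu, hPv]
      module
    rw [← Matrix.mulVec_mulVec, hB, hAv]
end

section
/- Let P and Q be orthogonal projections on ℝⁿ and U = (2P − I)(2Q − I). Then a vector z satisfies Uz = −z if and only if z lies in (col(P) ∩ ker(Q)) ⊕ (ker(P) ∩ col(Q)). -/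
open Matrix LinearMap

lemma mem_range_toLin'_iff {n : ℕ} (P : Matrix (Fin n) (Fin n) ℝ)
    (hP2 : P * P = P) (z : Fin n → ℝ) :
    z ∈ LinearMap.range (Matrix.toLin' P) ↔ P *ᵥ z = z := by
  constructor
  · rintro ⟨w, rfl⟩
    simp [Matrix.toLin'_apply, Matrix.mulVec_mulVec, hP2]
  · intro h
    exact ⟨z, by simp [Matrix.toLin'_apply, h]⟩

theorem stmt_4 {n : ℕ} (P Q : Matrix (Fin n) (Fin n) ℝ)
    (hP2 : P * P = P) (hPs : Pᵀ = P) (hQ2 : Q * Q = Q) (hQs : Qᵀ = Q)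
    (z : Fin n → ℝ) :
    (((2 : ℝ) • P - 1) * ((2 : ℝ) • Q - 1)) *ᵥ z = -z ↔
    z ∈ (LinearMap.range (Matrix.toLin' P) ⊓ LinearMap.ker (Matrix.toLin' Q)) ⊔
        (LinearMap.ker (Matrix.toLin' P) ⊓ LinearMap.range (Matrix.toLin' Q)) := by
  have hexp : (((2 : ℝ) • P - 1) * ((2 : ℝ) • Q - 1)) *ᵥ z
      = (4 : ℝ) • (P *ᵥ (Q *ᵥ z)) - (2 : ℝ) • (P *ᵥ z) - (2 : ℝ) • (Q *ᵥ z) + z := by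
    rw [← Matrix.mulVec_mulVec]
    simp only [Matrix.sub_mulVec, Matrix.smul_mulVec, Matrix.one_mulVec,
      Matrix.mulVec_sub, Matrix.mulVec_smul]
    module
  constructor
  · intro h
    rw [hexp] at h
    -- first show P *ᵥ (Q *ᵥ z) = 0
    have hw : P *ᵥ (Q *ᵥ z) = 0 := by
      have hP := congrArg (P *ᵥ ·) h
      simp only [Matrix.mulVec_add, Matrix.mulVec_sub, Matrix.mulVec_smul,
        Matrix.mulVec_mulVec, Matrix.mulVec_neg, ← Matrix.mul_assoc, hP2] at hP
      rw [show (4:ℝ) • (P * Q) *ᵥ z - (2:ℝ) • P *ᵥ z - (2:ℝ) • (P * Q) *ᵥ z + P *ᵥ z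
          = (2:ℝ) • (P * Q) *ᵥ z - P *ᵥ z by module] at hP
      have : (2:ℝ) • (P * Q) *ᵥ z = 0 := by
        linear_combination (norm := module) hP
      have h2 : (P * Q) *ᵥ z = 0 := by
        have := congrArg (fun v => ((2:ℝ)⁻¹) • v) this
        simpa [smul_smul] using this
      simpa [Matrix.mulVec_mulVec] using h2
    have hz : z = P *ᵥ z + Q *ᵥ z := by
      rw [hw] at h
      linear_combination (norm := module) ((2:ℝ)⁻¹) • h
    have hQP : Q *ᵥ (P *ᵥ z) = 0 := by
      have := congrArg (Q *ᵥ ·) hz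
      simp only [Matrix.mulVec_add, Matrix.mulVec_mulVec, hQ2] at this
      have h2 : Q *ᵥ z = (Q * P) *ᵥ z + Q *ᵥ z := this
      have : (Q * P) *ᵥ z = 0 := by linear_combination (norm := module) -h2
      simpa [Matrix.mulVec_mulVec] using this
    refine Submodule.mem_sup.2 ⟨P *ᵥ z, ⟨?_, ?_⟩, Q *ᵥ z, ⟨?_, ?_⟩, hz.symm⟩
    · exact ⟨z, by simp [Matrix.toLin'_apply]⟩
    · simpa [LinearMap.mem_ker, Matrix.toLin'_apply] using hQP
    · simpa [LinearMap.mem_ker, Matrix.toLin'_apply] using hw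
    · exact ⟨z, by simp [Matrix.toLin'_apply]⟩
  · intro h
    obtain ⟨x, hx, y, hy, hxy⟩ := Submodule.mem_sup.1 h
    rw [Submodule.mem_inf] at hx hy
    obtain ⟨hx1, hx2⟩ := hx
    obtain ⟨hy1, hy2⟩ := hy
    rw [mem_range_toLin'_iff P hP2] at hx1
    rw [mem_range_toLin'_iff Q hQ2] at hy2
    rw [LinearMap.mem_ker, Matrix.toLin'_apply] at hx2 hy1
    rw [hexp, ← hxy]
    simp only [Matrix.mulVec_add, hx1, hx2, hy1, hy2, add_zero, zero_add]
    module
end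

section
/- Let P and Q be orthogonal projections on ℝⁿ with U = (2P−I)(2Q−I), and let z = Qz be a unit vector in col(Q) that is an eigenvector of QPQ with eigenvalue μ where 0 < μ < 1. Set θ so that cos θ = 2μ − 1. Then the vector (cos θ + 1)z − (e^{iθ} + 1)Pz is a nonzero eigenvector of U (viewed as a complex matrix) with eigenvalue e^{iθ}. -/
open Matrix Complex

theorem stmt_6 {n : ℕ} (P Q : Matrix (Fin n) (Fin n) ℝ)
    (hP2 : P * P = P) (hPs : Pᵀ = P) (hQ2 : Q * Q = Q) (hQs : Qᵀ = Q)
    (z : Fin n → ℝ) (hz : z ≠ 0) (hzQ : Q *ᵥ z = z)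
    (μ : ℝ) (hμ0 : 0 < μ) (hμ1 : μ < 1) (hzP : Q *ᵥ (P *ᵥ (Q *ᵥ z)) = μ • z)
    (θ : ℝ) (hθ0 : 0 < θ) (hθπ : θ < Real.pi) (hcos : Real.cos θ = 2 * μ - 1) :
    (fun i => ((Real.cos θ + 1 : ℝ) : ℂ) * (z i : ℂ)
        - (Complex.exp (θ * Complex.I) + 1) * ((P *ᵥ z) i : ℂ)) ≠ 0 ∧
    ((((2 : ℝ) • P - 1) * ((2 : ℝ) • Q - 1)).map (fun x => (x : ℂ))) *ᵥ
      (fun i => ((Real.cos θ + 1 : ℝ) : ℂ) * (z i : ℂ)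
        - (Complex.exp (θ * Complex.I) + 1) * ((P *ᵥ z) i : ℂ))
    = Complex.exp (θ * Complex.I) •
      (fun i => ((Real.cos θ + 1 : ℝ) : ℂ) * (z i : ℂ)
        - (Complex.exp (θ * Complex.I) + 1) * ((P *ᵥ z) i : ℂ)) := by
  set w : Fin n → ℝ := P *ᵥ z with hw
  rw [hzQ] at hzP
  -- hzP : Q *ᵥ w = μ • z
  have hPPz : P *ᵥ w = w := by rw [hw, mulVec_mulVec, hP2]
  have hBz : ((2:ℝ) • Q - 1) *ᵥ z = z := by
    rw [sub_mulVec, smul_mulVec, hzQ, one_mulVec, two_smul]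
    abel
  have hAz : ∀ v : Fin n → ℝ, P *ᵥ v = P *ᵥ v → True := fun _ _ => trivial
  have hPz' : ((2:ℝ) • P - 1) *ᵥ z = (2:ℝ) • w - z := by
    rw [sub_mulVec, smul_mulVec, one_mulVec, hw]
  have hMz : (((2:ℝ) • P - 1) * ((2:ℝ) • Q - 1)) *ᵥ z = (2:ℝ) • w - z := by
    rw [← mulVec_mulVec, hBz, hPz']
  have hBw : ((2:ℝ) • Q - 1) *ᵥ w = (2*μ) • z - w := by
    rw [sub_mulVec, smul_mulVec, hzP, one_mulVec, smul_smul]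
  have hPw' : ((2:ℝ) • P - 1) *ᵥ w = w := by
    rw [sub_mulVec, smul_mulVec, hPPz, one_mulVec, two_smul]
    abel
  have hMw : (((2:ℝ) • P - 1) * ((2:ℝ) • Q - 1)) *ᵥ w
      = (4*μ - 1) • w - (2*μ) • z := by
    rw [← mulVec_mulVec, hBw, mulVec_sub, mulVec_smul, hPz', hPw']
    funext i
    simp only [Pi.sub_apply, Pi.smul_apply, smul_eq_mul]
    ring
  set e : ℂ := Complex.exp (θ * Complex.I) with he
  have h1 : e = (Real.cos θ : ℂ) + (Real.sin θ : ℂ) * Complex.I := by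
    rw [he, Complex.exp_mul_I, Complex.ofReal_cos, Complex.ofReal_sin]
  have h2 : (Real.sin θ : ℂ)^2 + (Real.cos θ : ℂ)^2 = 1 := by
    exact_mod_cast Real.sin_sq_add_cos_sq θ
  have key : e * e - 2 * (Real.cos θ : ℂ) * e + 1 = 0 := by
    rw [h1]
    linear_combination (-1 : ℂ) * h2 + ((Real.sin θ : ℂ)^2) * Complex.I_sq
  have hcC : (Real.cos θ : ℂ) = 2 * (μ : ℂ) - 1 := by exact_mod_cast hcos
  have hsin : Real.sin θ ≠ 0 := ne_of_gt (Real.sin_pos_of_pos_of_lt_pi hθ0 hθπ)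
  constructor
  · intro h
    have hw0 : ∀ i, w i = 0 := by
      intro i
      have hi := congrFun h i
      simp only [Pi.zero_apply] at hi
      have him := congrArg Complex.im hi
      simp only [Complex.sub_im, Complex.mul_im, Complex.ofReal_re, Complex.ofReal_im,
        Complex.add_im, Complex.one_im, Complex.zero_im, he,
        Complex.exp_ofReal_mul_I_im] at him
      have : Real.sin θ * w i = 0 := by linarith
      exact (mul_eq_zero.mp this).resolve_left hsin
    have hz0 : z = 0 := by
      funext i
      have hi := congrFun h i
      simp only [Pi.zero_apply, hw0 i, Complex.ofReal_zero, mul_zero, sub_zero] at hi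
      have ha : ((Real.cos θ + 1 : ℝ) : ℂ) ≠ 0 := by
        rw [Complex.ofReal_ne_zero]
        nlinarith
      have := (mul_eq_zero.mp hi).resolve_left ha
      exact_mod_cast this
    exact hz hz0
  · have hcastz : ((((2:ℝ) • P - 1) * ((2:ℝ) • Q - 1)).map (fun x => (x : ℂ))) *ᵥ
        (fun i => (z i : ℂ)) = fun i => ((((((2:ℝ) • P - 1) * ((2:ℝ) • Q - 1)) *ᵥ z) i : ℝ) : ℂ) := by
      funext i
      exact (RingHom.map_mulVec Complex.ofRealHom (((2:ℝ) • P - 1) * ((2:ℝ) • Q - 1)) z i).symm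
    have hcastw : ((((2:ℝ) • P - 1) * ((2:ℝ) • Q - 1)).map (fun x => (x : ℂ))) *ᵥ
        (fun i => (w i : ℂ)) = fun i => ((((((2:ℝ) • P - 1) * ((2:ℝ) • Q - 1)) *ᵥ w) i : ℝ) : ℂ) := by
      funext i
      exact (RingHom.map_mulVec Complex.ofRealHom (((2:ℝ) • P - 1) * ((2:ℝ) • Q - 1)) w i).symm
    have hv : (fun i => ((Real.cos θ + 1 : ℝ) : ℂ) * (z i : ℂ) - (e + 1) * (w i : ℂ))
        = ((Real.cos θ + 1 : ℝ) : ℂ) • (fun i => (z i : ℂ)) - (e + 1) • (fun i => (w i : ℂ)) := by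
      funext i
      simp [smul_eq_mul]
    rw [hv, mulVec_sub, mulVec_smul, mulVec_smul, hcastz, hcastw, hMz, hMw]
    funext i
    simp only [Pi.sub_apply, Pi.smul_apply, smul_eq_mul, Complex.ofReal_sub,
      Complex.ofReal_mul, Complex.ofReal_ofNat, Complex.ofReal_one, Complex.ofReal_add]
    push_cast
    simp only [← Complex.ofReal_cos]
    linear_combination (w i : ℂ) * key + (2*(e+1)*(w i : ℂ) - (e+1)*(z i : ℂ)) * hcC
end

section
/- Let P and Q be orthogonal projections and U = (2P−I)(2Q−I). If z is a unit vector with Qz = z and QPQz = μz for a scalar μ, then the span of {z, Pz} is U-invariant; concretely, Uz = −z + 2Pz and U(Pz) = −2μ z + (4μ − 1) Pz. -/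
open Matrix

theorem stmt_7 {n : ℕ} (P Q : Matrix (Fin n) (Fin n) ℝ)
    (hP2 : P * P = P) (hPs : Pᵀ = P) (hQ2 : Q * Q = Q) (hQs : Qᵀ = Q)
    (z : Fin n → ℝ) (hunit : z ⬝ᵥ z = 1) (hzQ : Q *ᵥ z = z)
    (μ : ℝ) (hzP : Q *ᵥ (P *ᵥ (Q *ᵥ z)) = μ • z) :
    (((2 : ℝ) • P - 1) * ((2 : ℝ) • Q - 1)) *ᵥ z = -z + (2 : ℝ) • (P *ᵥ z) ∧
    (((2 : ℝ) • P - 1) * ((2 : ℝ) • Q - 1)) *ᵥ (P *ᵥ z)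
      = (-(2 * μ)) • z + (4 * μ - 1) • (P *ᵥ z) := by
  rw [hzQ] at hzP
  have hPP : P *ᵥ (P *ᵥ z) = P *ᵥ z := by
    rw [Matrix.mulVec_mulVec, hP2]
  constructor
  · rw [← Matrix.mulVec_mulVec]
    simp only [Matrix.sub_mulVec, Matrix.smul_mulVec, Matrix.one_mulVec,
      Matrix.mulVec_sub, Matrix.mulVec_smul, hzQ]
    module
  · rw [← Matrix.mulVec_mulVec]
    simp only [Matrix.sub_mulVec, Matrix.smul_mulVec, Matrix.one_mulVec, hzP,
      Matrix.mulVec_sub, Matrix.mulVec_smul, hPP]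
    module
end

section
/- Let C be a 0-1 incidence matrix with constant row sums d and constant column sums k (C𝟙 = d𝟙, Cᵀ𝟙 = k𝟙), and suppose CCᵀ has exactly two distinct nonzero eigenvalues dk and μ, with the dk-eigenspace spanned by 𝟙. Then CCᵀC = μC + (k(dk−μ)/n)·J, where n is the number of rows of C and J is the all-ones matrix. -/
open Matrix

theorem stmt_13 {n b : ℕ} (hn : 0 < n)
    (C : Matrix (Fin n) (Fin b) ℝ) (d k μ : ℝ)
    (h01 : ∀ i j, C i j = 0 ∨ C i j = 1)
    (hrow : C *ᵥ (fun _ => (1 : ℝ)) = d • ((fun _ => 1) : Fin n → ℝ))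
    (hcol : Cᵀ *ᵥ (fun _ => (1 : ℝ)) = k • ((fun _ => 1) : Fin b → ℝ))
    (E₀ : Matrix (Fin n) (Fin n) ℝ)
    (hE₀s : E₀ᵀ = E₀) (hE₀2 : E₀ * E₀ = E₀)
    (hker : C * Cᵀ * E₀ = 0)
    (hμ : μ ≠ d * k)
    (hdecomp : C * Cᵀ
      = (d * k) • ((n : ℝ)⁻¹ • (Matrix.of fun _ _ => (1 : ℝ)))
        + μ • (1 - (n : ℝ)⁻¹ • (Matrix.of fun _ _ => (1 : ℝ)) - E₀)) :
    C * Cᵀ * C = μ • C + (k * (d * k - μ) / n) • (Matrix.of fun _ _ => (1 : ℝ)) := by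
  have hn' : (n : ℝ) ≠ 0 := Nat.cast_ne_zero.mpr hn.ne'
  -- E₀ * C = 0
  have h1 : E₀ * (C * Cᵀ) = 0 := by
    have := congrArg Matrix.transpose hker
    simpa [Matrix.transpose_mul, hE₀s, Matrix.mul_assoc] using this
  have h2 : (E₀ * C) * (E₀ * C)ᴴ = 0 := by
    have : (E₀ * C)ᴴ = Cᵀ * E₀ := by
      simp [Matrix.conjTranspose_mul, Matrix.conjTranspose_eq_transpose_of_trivial, hE₀s]
    rw [this, Matrix.mul_assoc, ← Matrix.mul_assoc C, ← Matrix.mul_assoc, h1, Matrix.zero_mul]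
  have hE0C : E₀ * C = 0 := Matrix.self_mul_conjTranspose_eq_zero.mp h2
  -- J * C = k • J'
  have hJC : ((Matrix.of fun _ _ => (1 : ℝ)) : Matrix (Fin n) (Fin n) ℝ) * C
      = k • (Matrix.of (fun _ _ => (1 : ℝ)) : Matrix (Fin n) (Fin b) ℝ) := by
    ext i j
    have := congrFun hcol j
    simp only [Matrix.mulVec, dotProduct, Matrix.transpose_apply, mul_one,
      Pi.smul_apply, smul_eq_mul] at this
    simp [Matrix.mul_apply, this]
  rw [hdecomp]
  simp only [Matrix.add_mul, Matrix.sub_mul, Matrix.smul_mul, Matrix.one_mul, hE0C, hJC]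
  ext i j
  simp only [Matrix.add_apply, Matrix.sub_apply, Matrix.smul_apply, smul_eq_mul,
    Matrix.of_apply, Matrix.zero_apply]
  field_simp
  ring
end
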